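/- Let G(x,y) ≡ G(t,s,x,y) = ∑_{n≥0} t^n ∑_{(k,a,b)} p_{n,(k,a,b)} s^k x^a y^b, an element of ℤ[s,s^{−1},x,y][[t]]. Then G satisfies the functional equation G(x,y) = 1 + t·x·y·G(x,y) + (t/x)(G(x,y) − G(0,y)) + (t/y)(G(x,y) − G(x,0)) + t·s·G(0,x) + t·s^{−1}·y·G(y,0), where G(0,y), G(x,0), G(0,x), G(y,0) denote the indicated substitutions and (G(x,y)−G(0,y))/x, (G(x,y)−G(x,0))/y are the (well-defined) quotients in ℤ[s,s^{−1},x,y][[t]]. -/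

import Mathlib

open scoped BigOperators
noncomputable section

abbrev WSt : Type := ℤ × ℕ × ℕ

def cellStep (v w : WSt) : Prop :=
  w = (v.1, v.2.1 + 1, v.2.2 + 1) ∨
  (1 ≤ v.2.2 ∧ w = (v.1, v.2.1, v.2.2 - 1)) ∨
  (1 ≤ v.2.1 ∧ w = (v.1, v.2.1 - 1, v.2.2)) ∨
  (v.2.1 = 0 ∧ w = (v.1 + 1, v.2.2, 0)) ∨
  (v.2.2 = 0 ∧ w = (v.1 - 1, 0, v.2.1 + 1))

def vertStep (v w : WSt) : Prop :=
  w = (v.1, v.2.1 + 1, v.2.2 + 1) ∨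
  (1 ≤ v.2.2 ∧ w = (v.1, v.2.1, v.2.2 - 1)) ∨
  (1 ≤ v.2.1 ∧ w = (v.1, v.2.1 - 1, v.2.2)) ∨
  (v.2.1 = 0 ∧ 1 ≤ v.2.2 ∧ w = (v.1 + 1, v.2.2 - 1, 0)) ∨
  (v.2.2 = 0 ∧ w = (v.1 - 1, 0, v.2.1 + 2))

def pathCount (step : WSt → WSt → Prop) (n : ℕ) (v : WSt) : ℕ :=
  Nat.card {p : Fin (n + 1) → WSt //
    p 0 = ((0 : ℤ), 0, 0) ∧ p (Fin.last n) = v ∧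
    ∀ i : Fin n, step (p i.castSucc) (p i.succ)}

/-- number of cell-centred excursions of length `n` with winding angle `2πk/3` -/
def eCell (n : ℕ) (k : ℤ) : ℕ := pathCount cellStep n (k, 0, 0)

/-- number of vertex-centred walks of length `n` with winding angle `2πk/3` -/
def eVert (n : ℕ) (k : ℤ) : ℕ := pathCount vertStep n (k, 0, 0)

/-- The series `T_k(u,q)`. -/
def Tk (k : ℕ) (u q : ℂ) : ℂ :=
  ∑' n : ℕ, (-1 : ℂ) ^ n * ((2 * n + 1 : ℕ) : ℂ) ^ k * q ^ (n * (n + 1) / 2) *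
    (u ^ (n + 1) - (-1 : ℂ) ^ k * u ^ (-(n : ℤ)))

/-- Jacobi theta function θ₁₁. -/
def jTheta (z τ : ℂ) : ℂ :=
  ∑' n : ℤ, (-1 : ℂ) ^ n *
    Complex.exp (((2 * (n : ℂ) + 1) / 2) ^ 2 * Complex.I * (Real.pi : ℂ) * τ +
      (2 * (n : ℂ) + 1) * Complex.I * z)

/-- derivative of θ with respect to z -/
def jTheta' (z τ : ℂ) : ℂ := deriv (fun w => jTheta w τ) z

/-- The ring `ℤ[s, s⁻¹]` of Laurent polynomials in the winding variable `s`. -/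
abbrev LZ := LaurentPolynomial ℤ

/-- Coefficient of `t^n x^a y^b` (with `d 0 = n`, `d 1 = a`, `d 2 = b`) in the full
generating function `G(t,s,x,y)` of cell-centred Kreweras walks: `∑_k p_{n,(k,a,b)} s^k`.
Since a walk of length `n` has wedge index of absolute value at most `n`, the sum is finite. -/
def cellCoeff (d : Fin 3 →₀ ℕ) : LZ :=
  ∑ k ∈ Finset.Icc (-(d 0 : ℤ)) (d 0 : ℤ),
    (pathCount cellStep (d 0) (k, d 1, d 2) : LZ) * LaurentPolynomial.T k

/-- `G(x,y)`, an element of `ℤ[s,s⁻¹][[t,x,y]]` (containing `ℤ[s,s⁻¹,x,y][[t]]`). -/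
def cellGL : MvPowerSeries (Fin 3) LZ := fun d => cellCoeff d

/-- `G(0,y)` -/
def cellGL0y : MvPowerSeries (Fin 3) LZ := fun d => if d 1 = 0 then cellCoeff d else 0

/-- `G(x,0)` -/
def cellGLx0 : MvPowerSeries (Fin 3) LZ := fun d => if d 2 = 0 then cellCoeff d else 0

/-- `G(0,x)`: the series in `t` and `x` whose coefficient of `t^n x^a` is `∑_k p_{n,(k,0,a)} s^k`. -/
def cellGL0x : MvPowerSeries (Fin 3) LZ := fun d =>
  if d 2 = 0 then
    ∑ k ∈ Finset.Icc (-(d 0 : ℤ)) (d 0 : ℤ),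
      (pathCount cellStep (d 0) (k, 0, d 1) : LZ) * LaurentPolynomial.T k
  else 0

/-- `G(y,0)`: the series in `t` and `y` whose coefficient of `t^n y^b` is `∑_k p_{n,(k,b,0)} s^k`. -/
def cellGLy0 : MvPowerSeries (Fin 3) LZ := fun d =>
  if d 1 = 0 then
    ∑ k ∈ Finset.Icc (-(d 0 : ℤ)) (d 0 : ℤ),
      (pathCount cellStep (d 0) (k, d 2, 0) : LZ) * LaurentPolynomial.T k
  else 0

namespace KrewerasAux

abbrev PathSet (step : WSt → WSt → Prop) (n : ℕ) (v : WSt) : Type :=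
  {p : Fin (n + 1) → WSt //
    p 0 = ((0 : ℤ), 0, 0) ∧ p (Fin.last n) = v ∧
    ∀ i : Fin n, step (p i.castSucc) (p i.succ)}

lemma pathCount_def (step : WSt → WSt → Prop) (n : ℕ) (v : WSt) :
    pathCount step n v = Nat.card (PathSet step n v) := rfl

lemma path_bound {n : ℕ} (p : Fin (n+1) → WSt) (h0 : p 0 = ((0:ℤ),0,0))
    (hs : ∀ i : Fin n, cellStep (p i.castSucc) (p i.succ)) :
    ∀ i : Fin (n+1), (p i).1.natAbs ≤ i.val ∧ (p i).2.1 ≤ i.val ∧ (p i).2.2 ≤ i.val := by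
  intro i
  induction i using Fin.induction with
  | zero => simp [h0]
  | succ i ih =>
    have h := hs i
    rcases h with h | ⟨hb, h⟩ | ⟨ha, h⟩ | ⟨ha, h⟩ | ⟨hb, h⟩ <;>
      rw [h] <;> simp only [Fin.val_succ, Fin.coe_castSucc] at ih ⊢ <;> omega

instance pathSetFinite (n : ℕ) (v : WSt) : Finite (PathSet cellStep n v) := by
  have hb : ∀ q : PathSet cellStep n v, ∀ i : Fin (n+1),
      (q.1 i).1.natAbs ≤ n ∧ (q.1 i).2.1 ≤ n ∧ (q.1 i).2.2 ≤ n := by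
    intro q i
    have h1 := path_bound q.1 q.2.1 q.2.2.2 i
    have h2 : i.val ≤ n := Nat.lt_succ_iff.mp i.isLt
    exact ⟨h1.1.trans h2, h1.2.1.trans h2, h1.2.2.trans h2⟩
  let F : PathSet cellStep n v →
      (Fin (n+1) → Set.Icc (-(n:ℤ)) (n:ℤ) × Fin (n+1) × Fin (n+1)) := fun q i =>
    (⟨(q.1 i).1, by have := (hb q i).1; constructor <;> omega⟩,
     ⟨(q.1 i).2.1, by have := (hb q i).2.1; omega⟩,
     ⟨(q.1 i).2.2, by have := (hb q i).2.2; omega⟩)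
  have hF : Function.Injective F := by
    intro q q' h
    apply Subtype.ext; funext i
    have := congrFun h i
    simp only [F, Prod.mk.injEq, Subtype.mk.injEq, Fin.mk.injEq] at this
    exact Prod.ext (congrArg Subtype.val this.1) (Prod.ext this.2.1 this.2.2)
  exact Finite.of_injective F hF

/-- vanishing of path counts when the winding index is too large -/
lemma pathCount_eq_zero {n : ℕ} {k : ℤ} {a b : ℕ} (h : n < k.natAbs) :
    pathCount cellStep n (k, a, b) = 0 := by
  rw [pathCount_def, Nat.card_eq_zero]
  left
  constructor
  rintro ⟨p, h0, hl, hs⟩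
  have := (path_bound p h0 hs (Fin.last n)).1
  rw [hl] at this
  simp only [Fin.val_last] at this
  omega

instance instDecCellStep : ∀ w v : WSt, Decidable (cellStep w v) :=
  fun _ _ => Classical.dec _

def cands (v : WSt) : Finset WSt :=
  {(v.1, v.2.1 - 1, v.2.2 - 1), (v.1, v.2.1, v.2.2 + 1), (v.1, v.2.1 + 1, v.2.2),
   (v.1 - 1, 0, v.2.1), (v.1 + 1, v.2.2 - 1, 0)}

def preds (v : WSt) : Finset WSt := (cands v).filter (fun w => cellStep w v)

lemma mem_preds {w v : WSt} : w ∈ preds v ↔ cellStep w v := by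
  rw [preds, Finset.mem_filter, and_iff_right_iff_imp]
  rcases v with ⟨k, a, b⟩; rcases w with ⟨k', a', b'⟩
  intro h
  simp only [cellStep, Prod.mk.injEq] at h
  simp only [cands, Finset.mem_insert, Finset.mem_singleton, Prod.mk.injEq]
  rcases h with h | h | h | h | h <;>
    [left; (right;left); (right;right;left); (right;right;right;left);
     (right;right;right;right)] <;> omega

lemma sum_preds {M : Type*} [AddCommMonoid M] (k : ℤ) (a b : ℕ) (f : WSt → M) :
    ∑ w ∈ preds (k, a, b), f w =
      (if 1 ≤ a ∧ 1 ≤ b then f (k, a - 1, b - 1) else 0) + f (k, a, b + 1) + f (k, a + 1, b) +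
      (if b = 0 then f (k - 1, 0, a) else 0) + (if a = 0 ∧ 1 ≤ b then f (k + 1, b - 1, 0) else 0) := by
  rw [preds, Finset.sum_filter, cands]
  have d1 : ((k, a - 1, b - 1) : WSt) ∉ ({(k, a, b + 1), (k, a + 1, b), (k - 1, 0, a), (k + 1, b - 1, 0)} : Finset WSt) := by
    simp only [Finset.mem_insert, Finset.mem_singleton, Prod.mk.injEq]; omega
  have d2 : ((k, a, b + 1) : WSt) ∉ ({(k, a + 1, b), (k - 1, 0, a), (k + 1, b - 1, 0)} : Finset WSt) := by
    simp only [Finset.mem_insert, Finset.mem_singleton, Prod.mk.injEq]; omega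
  have d3 : ((k, a + 1, b) : WSt) ∉ ({(k - 1, 0, a), (k + 1, b - 1, 0)} : Finset WSt) := by
    simp only [Finset.mem_insert, Finset.mem_singleton, Prod.mk.injEq]; omega
  have d4 : ((k - 1, 0, a) : WSt) ∉ ({(k + 1, b - 1, 0)} : Finset WSt) := by
    simp only [Finset.mem_singleton, Prod.mk.injEq]; omega
  rw [Finset.sum_insert d1, Finset.sum_insert d2, Finset.sum_insert d3, Finset.sum_insert d4,
    Finset.sum_singleton]
  have h1 : cellStep (k, a - 1, b - 1) (k, a, b) ↔ (1 ≤ a ∧ 1 ≤ b) := by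
    simp only [cellStep, Prod.mk.injEq, true_and, and_true]; omega
  have h2 : cellStep (k, a, b + 1) (k, a, b) := by
    simp only [cellStep, Prod.mk.injEq, true_and, and_true]; omega
  have h3 : cellStep (k, a + 1, b) (k, a, b) := by
    simp only [cellStep, Prod.mk.injEq, true_and, and_true]; omega
  have h4 : cellStep (k - 1, 0, a) (k, a, b) ↔ b = 0 := by
    simp only [cellStep, Prod.mk.injEq, true_and, and_true]; omega
  have h5 : cellStep (k + 1, b - 1, 0) (k, a, b) ↔ (a = 0 ∧ 1 ≤ b) := by
    simp only [cellStep, Prod.mk.injEq, true_and, and_true]; omega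
  rw [if_pos h2, if_pos h3]
  simp only [h1, h4, h5]
  abel


def penultF {n : ℕ} {v : WSt} (q : PathSet cellStep (n + 1) v) : ↥(preds v) :=
  ⟨q.1 (Fin.castSucc (Fin.last n)), by
    rw [mem_preds]
    have h := q.2.2.2 (Fin.last n)
    rwa [Fin.succ_last, q.2.2.1] at h⟩

def fiberEquiv (n : ℕ) (v : WSt) (w : WSt) (hw : cellStep w v) :
    {q : PathSet cellStep (n + 1) v // q.1 (Fin.castSucc (Fin.last n)) = w} ≃
      PathSet cellStep n w where
  toFun q := ⟨fun i => q.1.1 i.castSucc, by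
    refine ⟨?_, ?_, ?_⟩
    · simpa using q.1.2.1
    · exact q.2
    · intro i
      have h := q.1.2.2.2 i.castSucc
      rwa [Fin.succ_castSucc] at h⟩
  invFun p := ⟨⟨Fin.snoc p.1 v, by
    refine ⟨?_, ?_, ?_⟩
    · rw [show (0 : Fin (n + 2)) = Fin.castSucc 0 from rfl, Fin.snoc_castSucc]
      exact p.2.1
    · rw [Fin.snoc_last]
    · intro i
      induction i using Fin.lastCases with
      | last =>
        rw [Fin.succ_last, Fin.snoc_last, Fin.snoc_castSucc, p.2.2.1]
        exact hw
      | cast j =>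
        rw [Fin.succ_castSucc, Fin.snoc_castSucc, Fin.snoc_castSucc]
        exact p.2.2.2 j⟩,
    by exact (Fin.snoc_castSucc (α := fun _ => WSt) (p := p.1) (x := v) (i := Fin.last n)).trans p.2.2.1⟩
  left_inv q := by
    apply Subtype.ext; apply Subtype.ext; funext i
    dsimp only
    induction i using Fin.lastCases with
    | last => rw [Fin.snoc_last, q.1.2.2.1]
    | cast j => rw [Fin.snoc_castSucc]
  right_inv p := by
    apply Subtype.ext; funext i
    dsimp only
    rw [Fin.snoc_castSucc]

def splitEquiv (n : ℕ) (v : WSt) :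
    PathSet cellStep (n + 1) v ≃ Σ w : ↥(preds v), PathSet cellStep n w.val :=
  ((Equiv.sigmaFiberEquiv (penultF (n := n) (v := v))).symm.trans
    (Equiv.sigmaCongrRight (fun w =>
      ((Equiv.subtypeEquivRight (fun q => by
          rw [Subtype.ext_iff]; rfl)).trans
        (fiberEquiv n v w.val (mem_preds.mp w.2))))))

lemma pathCount_succ (n : ℕ) (v : WSt) :
    pathCount cellStep (n + 1) v = ∑ w ∈ preds v, pathCount cellStep n w := by
  classical
  rw [pathCount_def, Nat.card_congr (splitEquiv n v)]
  letI : ∀ w : ↥(preds v), Fintype (PathSet cellStep n w.val) := fun w => Fintype.ofFinite _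
  rw [Nat.card_eq_fintype_card, Fintype.card_sigma,
    ← Finset.sum_coe_sort (preds v) (fun w => pathCount cellStep n w)]
  exact Finset.sum_congr rfl (fun w _ => by rw [pathCount_def, Nat.card_eq_fintype_card])

lemma pathCount_zero (v : WSt) :
    pathCount cellStep 0 v = if v = ((0 : ℤ), 0, 0) then 1 else 0 := by
  rw [pathCount_def]
  split_ifs with h
  · subst h
    haveI : Subsingleton (PathSet cellStep 0 ((0:ℤ),0,0)) := by
      constructor
      rintro ⟨p, hp⟩ ⟨q, hq⟩
      apply Subtype.ext; funext i
      show p i = q i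
      have hi : i = 0 := by apply Fin.ext; omega
      rw [hi, hp.1, hq.1]
    haveI : Nonempty (PathSet cellStep 0 ((0:ℤ),0,0)) :=
      ⟨⟨fun _ => ((0:ℤ),0,0), rfl, rfl, fun i => i.elim0⟩⟩
    rw [Nat.card_eq_one_iff_unique]
    exact ⟨‹_›, ‹_›⟩
  · rw [Nat.card_eq_zero]
    left
    constructor
    rintro ⟨p, h0, hl, -⟩
    exact h (by rw [← hl, show Fin.last 0 = 0 from rfl, h0])

lemma pathCount_rec (n : ℕ) (k : ℤ) (a b : ℕ) :
    pathCount cellStep (n + 1) (k, a, b) =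
      (if 1 ≤ a ∧ 1 ≤ b then pathCount cellStep n (k, a - 1, b - 1) else 0) +
      pathCount cellStep n (k, a, b + 1) + pathCount cellStep n (k, a + 1, b) +
      (if b = 0 then pathCount cellStep n (k - 1, 0, a) else 0) +
      (if a = 0 ∧ 1 ≤ b then pathCount cellStep n (k + 1, b - 1, 0) else 0) := by
  rw [pathCount_succ, sum_preds]


open LaurentPolynomial in
def cc (n a b : ℕ) : LaurentPolynomial ℤ :=
  ∑ k ∈ Finset.Icc (-(n : ℤ)) (n : ℤ), (pathCount cellStep n (k, a, b) : LaurentPolynomial ℤ) * T k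

open LaurentPolynomial

lemma cc_zero (a b : ℕ) : cc 0 a b = if a = 0 ∧ b = 0 then 1 else 0 := by
  rw [cc]
  norm_num
  rw [pathCount_zero]
  simp only [Prod.mk.injEq, true_and, T_zero]
  split_ifs with h1 h2 h2 <;> simp_all

lemma shift_sum (m : ℕ) (c : ℤ) (hc : c.natAbs ≤ 1) (g : ℤ → ℕ)
    (hg : ∀ k : ℤ, m < k.natAbs → g k = 0) :
    ∑ k ∈ Finset.Icc (-(m : ℤ) - 1) ((m : ℤ) + 1), (g (k - c) : LaurentPolynomial ℤ) * T k =
      T c * ∑ k ∈ Finset.Icc (-(m : ℤ)) (m : ℤ), (g k : LaurentPolynomial ℤ) * T k := by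
  have hsub : Finset.Icc (-(m : ℤ) + c) ((m : ℤ) + c) ⊆
      Finset.Icc (-(m : ℤ) - 1) ((m : ℤ) + 1) := by
    intro k hk
    simp only [Finset.mem_Icc] at *
    omega
  rw [← Finset.sum_subset hsub]
  · rw [show (-(m : ℤ) + c) = -(m : ℤ) + c from rfl, ← Finset.map_add_right_Icc,
      Finset.sum_map]
    rw [Finset.mul_sum]
    refine Finset.sum_congr rfl (fun k hk => ?_)
    simp only [addRightEmbedding_apply, add_sub_cancel_right]
    rw [mul_left_comm, ← T_add, add_comm]
  · intro k hk hk'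
    simp only [Finset.mem_Icc] at hk hk'
    have : g (k - c) = 0 := hg _ (by
      have := hc
      omega)
    rw [this]
    simp

lemma sum_shrink (m : ℕ) (a b : ℕ) :
    ∑ k ∈ Finset.Icc (-(m : ℤ) - 1) ((m : ℤ) + 1),
        (pathCount cellStep m (k, a, b) : LaurentPolynomial ℤ) * T k = cc m a b := by
  have hsub : Finset.Icc (-(m : ℤ)) (m : ℤ) ⊆ Finset.Icc (-(m : ℤ) - 1) ((m : ℤ) + 1) := by
    intro k hk
    simp only [Finset.mem_Icc] at *
    omega
  have hvan : ∀ k ∈ Finset.Icc (-(m : ℤ) - 1) ((m : ℤ) + 1),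
      k ∉ Finset.Icc (-(m : ℤ)) (m : ℤ) →
      (pathCount cellStep m (k, a, b) : LaurentPolynomial ℤ) * T k = 0 := by
    intro k hk hk'
    simp only [Finset.mem_Icc] at hk hk'
    rw [pathCount_eq_zero (by omega)]
    simp
  rw [cc]
  exact (Finset.sum_subset hsub hvan).symm

lemma cc_rec (m : ℕ) (a b : ℕ) :
    cc (m + 1) a b =
      (if 1 ≤ a ∧ 1 ≤ b then cc m (a - 1) (b - 1) else 0) + cc m a (b + 1) + cc m (a + 1) b +
      (if b = 0 then
        T 1 * ∑ k ∈ Finset.Icc (-(m : ℤ)) (m : ℤ),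
          (pathCount cellStep m (k, 0, a) : LaurentPolynomial ℤ) * T k else 0) +
      (if a = 0 ∧ 1 ≤ b then
        T (-1) * ∑ k ∈ Finset.Icc (-(m : ℤ)) (m : ℤ),
          (pathCount cellStep m (k, b - 1, 0) : LaurentPolynomial ℤ) * T k else 0) := by
  have hIcc : Finset.Icc (-((m : ℤ) + 1)) ((m : ℤ) + 1) =
      Finset.Icc (-(m : ℤ) - 1) ((m : ℤ) + 1) := by congr 1; omega
  rw [cc]
  push_cast
  rw [hIcc]
  have hrec : ∀ k ∈ Finset.Icc (-(m : ℤ) - 1) ((m : ℤ) + 1),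
      (pathCount cellStep (m + 1) (k, a, b) : LaurentPolynomial ℤ) * T k =
      ((if 1 ≤ a ∧ 1 ≤ b then (pathCount cellStep m (k, a - 1, b - 1) : LaurentPolynomial ℤ) * T k else 0) +
       (pathCount cellStep m (k, a, b + 1) : LaurentPolynomial ℤ) * T k +
       (pathCount cellStep m (k, a + 1, b) : LaurentPolynomial ℤ) * T k +
       (if b = 0 then (pathCount cellStep m (k - 1, 0, a) : LaurentPolynomial ℤ) * T k else 0) +
       (if a = 0 ∧ 1 ≤ b then (pathCount cellStep m (k + 1, b - 1, 0) : LaurentPolynomial ℤ) * T k else 0)) := by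
    intro k _
    rw [pathCount_rec]
    push_cast
    rw [add_mul, add_mul, add_mul, add_mul]
    congr 1 <;> [skip; split_ifs <;> simp]
    congr 1 <;> [skip; split_ifs <;> simp]
    congr 1
    split_ifs <;> simp
  rw [Finset.sum_congr rfl hrec]
  rw [Finset.sum_add_distrib, Finset.sum_add_distrib, Finset.sum_add_distrib,
    Finset.sum_add_distrib]
  congr 1
  · congr 1
    · congr 1
      · congr 1
        · -- first term
          split_ifs with h
          · exact sum_shrink m (a-1) (b-1)
          · simp
        · exact sum_shrink m a (b+1)
      · exact sum_shrink m (a+1) b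
    · -- T 1 term
      split_ifs with h
      · have := shift_sum m 1 (by norm_num) (fun k => pathCount cellStep m (k, 0, a))
          (fun k hk => pathCount_eq_zero (by omega))
        simpa using this
      · simp
  · -- T (-1) term
    split_ifs with h
    · have := shift_sum m (-1) (by norm_num) (fun k => pathCount cellStep m (k, b - 1, 0))
        (fun k hk => pathCount_eq_zero (by omega))
      simpa using this
    · simp

section PS
open MvPowerSeries LaurentPolynomial

lemma coeff_X_mul' (i : Fin 3) (f : MvPowerSeries (Fin 3) LZ) (d : Fin 3 →₀ ℕ) :
    MvPowerSeries.coeff d (MvPowerSeries.X i * f) =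
      if 1 ≤ d i then MvPowerSeries.coeff (d - Finsupp.single i 1) f else 0 := by
  classical
  rw [MvPowerSeries.X_def, MvPowerSeries.coeff_monomial_mul]
  simp [Finsupp.single_le_iff]

lemma finsupp_zero_iff (d : Fin 3 →₀ ℕ) : d = 0 ↔ d 0 = 0 ∧ d 1 = 0 ∧ d 2 = 0 := by
  constructor
  · rintro rfl; simp
  · rintro ⟨h0, h1, h2⟩
    ext i
    fin_cases i <;> simpa

def Q1s : MvPowerSeries (Fin 3) LZ := fun d => cc (d 0) (d 1 + 1) (d 2)
def Q2s : MvPowerSeries (Fin 3) LZ := fun d => cc (d 0) (d 1) (d 2 + 1)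

lemma coeff_Q1s (d : Fin 3 →₀ ℕ) :
    MvPowerSeries.coeff d Q1s = cc (d 0) (d 1 + 1) (d 2) := rfl
lemma coeff_Q2s (d : Fin 3 →₀ ℕ) :
    MvPowerSeries.coeff d Q2s = cc (d 0) (d 1) (d 2 + 1) := rfl
lemma cellGL_app (e : Fin 3 →₀ ℕ) : MvPowerSeries.coeff e cellGL = cc (e 0) (e 1) (e 2) := rfl
lemma cellGL0y_app (e : Fin 3 →₀ ℕ) : MvPowerSeries.coeff e cellGL0y =
    if e 1 = 0 then cc (e 0) (e 1) (e 2) else 0 := rfl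
lemma cellGLx0_app (e : Fin 3 →₀ ℕ) : MvPowerSeries.coeff e cellGLx0 =
    if e 2 = 0 then cc (e 0) (e 1) (e 2) else 0 := rfl
lemma cellGL0x_app (e : Fin 3 →₀ ℕ) : MvPowerSeries.coeff e cellGL0x =
    if e 2 = 0 then
      ∑ k ∈ Finset.Icc (-(e 0 : ℤ)) (e 0 : ℤ),
        (pathCount cellStep (e 0) (k, 0, e 1) : LZ) * T k
    else 0 := rfl
lemma cellGLy0_app (e : Fin 3 →₀ ℕ) : MvPowerSeries.coeff e cellGLy0 =
    if e 1 = 0 then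
      ∑ k ∈ Finset.Icc (-(e 0 : ℤ)) (e 0 : ℤ),
        (pathCount cellStep (e 0) (k, e 2, 0) : LZ) * T k
    else 0 := rfl

end PS

end KrewerasAux

open KrewerasAux LaurentPolynomial

/-- equation (2): the functional equation for `G(x,y)`.  Here `Q1` and `Q2`
are the well-defined quotients `(G(x,y) − G(0,y))/x` and `(G(x,y) − G(x,0))/y`. -/
theorem cell_functional_equation :
    ∃ Q1 Q2 : MvPowerSeries (Fin 3) LZ,
      MvPowerSeries.X 1 * Q1 = cellGL - cellGL0y ∧
      MvPowerSeries.X 2 * Q2 = cellGL - cellGLx0 ∧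
      cellGL = 1 + MvPowerSeries.X 0 * MvPowerSeries.X 1 * MvPowerSeries.X 2 * cellGL +
        MvPowerSeries.X 0 * Q1 + MvPowerSeries.X 0 * Q2 +
        MvPowerSeries.X 0 * (MvPowerSeries.C (σ := Fin 3) (R := LZ)) (LaurentPolynomial.T 1) * cellGL0x +
        MvPowerSeries.X 0 * (MvPowerSeries.C (σ := Fin 3) (R := LZ)) (LaurentPolynomial.T (-1)) *
          MvPowerSeries.X 2 * cellGLy0 := by


  classical
  have hev : ∀ (e : Fin 3 →₀ ℕ) (i j : Fin 3),
      ((e - Finsupp.single i 1 : Fin 3 →₀ ℕ)) j = e j - (if i = j then 1 else 0) := by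
    intro e i j
    rw [Finsupp.tsub_apply, Finsupp.single_apply]
  refine ⟨Q1s, Q2s, ?_, ?_, ?_⟩
  · apply MvPowerSeries.ext; intro d
    rw [map_sub, coeff_X_mul', coeff_Q1s, cellGL_app, cellGL0y_app]
    simp only [hev,
      show ((1 : Fin 3) = 0) = False by decide, show ((1 : Fin 3) = 1) = True by decide,
      show ((1 : Fin 3) = 2) = False by decide, if_true, if_false, Nat.sub_zero]
    split_ifs with h h2
    · omega
    · have e1 : d 1 - 1 + 1 = d 1 := by omega
      rw [e1, sub_zero]
    · rw [sub_self]
    · omega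
  · apply MvPowerSeries.ext; intro d
    rw [map_sub, coeff_X_mul', coeff_Q2s, cellGL_app, cellGLx0_app]
    simp only [hev,
      show ((2 : Fin 3) = 0) = False by decide, show ((2 : Fin 3) = 1) = False by decide,
      show ((2 : Fin 3) = 2) = True by decide, if_true, if_false, Nat.sub_zero]
    split_ifs with h h2
    · omega
    · have e1 : d 2 - 1 + 1 = d 2 := by omega
      rw [e1, sub_zero]
    · rw [sub_self]
    · omega
  · apply MvPowerSeries.ext; intro d
    have h1 : MvPowerSeries.coeff d (1 : MvPowerSeries (Fin 3) LZ) =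
        if d 0 = 0 ∧ d 1 = 0 ∧ d 2 = 0 then 1 else 0 := by
      rw [MvPowerSeries.coeff_one]
      simp only [finsupp_zero_iff]
    have hA : MvPowerSeries.coeff d
        (MvPowerSeries.X 0 * MvPowerSeries.X 1 * MvPowerSeries.X 2 * cellGL) =
        if 1 ≤ d 0 ∧ 1 ≤ d 1 ∧ 1 ≤ d 2 then cc (d 0 - 1) (d 1 - 1) (d 2 - 1) else 0 := by
      rw [show (MvPowerSeries.X 0 * MvPowerSeries.X 1 * MvPowerSeries.X 2 * cellGL :
          MvPowerSeries (Fin 3) LZ) =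
          MvPowerSeries.X 0 * (MvPowerSeries.X 1 * (MvPowerSeries.X 2 * cellGL)) by ring]
      rw [coeff_X_mul', coeff_X_mul', coeff_X_mul', cellGL_app]
      simp only [hev,
        show ((0 : Fin 3) = 0) = True by decide, show ((0 : Fin 3) = 1) = False by decide,
        show ((0 : Fin 3) = 2) = False by decide, show ((1 : Fin 3) = 0) = False by decide,
        show ((1 : Fin 3) = 1) = True by decide, show ((1 : Fin 3) = 2) = False by decide,
        show ((2 : Fin 3) = 2) = True by decide, if_true, if_false, Nat.sub_zero]
      split_ifs <;> first | rfl | omega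
    have hQ1 : MvPowerSeries.coeff d (MvPowerSeries.X 0 * Q1s) =
        if 1 ≤ d 0 then cc (d 0 - 1) (d 1 + 1) (d 2) else 0 := by
      rw [coeff_X_mul', coeff_Q1s]
      simp only [hev,
        show ((0 : Fin 3) = 0) = True by decide, show ((0 : Fin 3) = 1) = False by decide,
        show ((0 : Fin 3) = 2) = False by decide, if_true, if_false, Nat.sub_zero]
    have hQ2 : MvPowerSeries.coeff d (MvPowerSeries.X 0 * Q2s) =
        if 1 ≤ d 0 then cc (d 0 - 1) (d 1) (d 2 + 1) else 0 := by
      rw [coeff_X_mul', coeff_Q2s]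
      simp only [hev,
        show ((0 : Fin 3) = 0) = True by decide, show ((0 : Fin 3) = 1) = False by decide,
        show ((0 : Fin 3) = 2) = False by decide, if_true, if_false, Nat.sub_zero]
    have hD : MvPowerSeries.coeff d
        (MvPowerSeries.X 0 * (MvPowerSeries.C (σ := Fin 3) (R := LZ)) (LaurentPolynomial.T 1) * cellGL0x) =
        if 1 ≤ d 0 then
          LaurentPolynomial.T 1 * (if d 2 = 0 then
            ∑ k ∈ Finset.Icc (-((d 0 - 1 : ℕ) : ℤ)) ((d 0 - 1 : ℕ) : ℤ),
              (pathCount cellStep (d 0 - 1) (k, 0, d 1) : LZ) * LaurentPolynomial.T k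
            else 0) else 0 := by
      rw [mul_assoc, coeff_X_mul', MvPowerSeries.coeff_C_mul, cellGL0x_app]
      simp only [hev,
        show ((0 : Fin 3) = 0) = True by decide, show ((0 : Fin 3) = 1) = False by decide,
        show ((0 : Fin 3) = 2) = False by decide, if_true, if_false, Nat.sub_zero]
    have hE : MvPowerSeries.coeff d
        (MvPowerSeries.X 0 * (MvPowerSeries.C (σ := Fin 3) (R := LZ)) (LaurentPolynomial.T (-1)) *
          MvPowerSeries.X 2 * cellGLy0) =
        if 1 ≤ d 0 then (if 1 ≤ d 2 then
          LaurentPolynomial.T (-1) * (if d 1 = 0 then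
            ∑ k ∈ Finset.Icc (-((d 0 - 1 : ℕ) : ℤ)) ((d 0 - 1 : ℕ) : ℤ),
              (pathCount cellStep (d 0 - 1) (k, d 2 - 1, 0) : LZ) * LaurentPolynomial.T k
            else 0) else 0) else 0 := by
      rw [show (MvPowerSeries.X 0 * (MvPowerSeries.C (σ := Fin 3) (R := LZ)) (LaurentPolynomial.T (-1)) *
          MvPowerSeries.X 2 * cellGLy0 : MvPowerSeries (Fin 3) LZ) =
          MvPowerSeries.X 0 * (MvPowerSeries.X 2 *
            ((MvPowerSeries.C (σ := Fin 3) (R := LZ)) (LaurentPolynomial.T (-1)) * cellGLy0)) by ring]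
      rw [coeff_X_mul', coeff_X_mul', MvPowerSeries.coeff_C_mul, cellGLy0_app]
      simp only [hev,
        show ((0 : Fin 3) = 0) = True by decide, show ((0 : Fin 3) = 1) = False by decide,
        show ((0 : Fin 3) = 2) = False by decide, show ((2 : Fin 3) = 0) = False by decide,
        show ((2 : Fin 3) = 1) = False by decide, show ((2 : Fin 3) = 2) = True by decide,
        if_true, if_false, Nat.sub_zero]
    rw [map_add, map_add, map_add, map_add, map_add, h1, hA, hQ1, hQ2, hD, hE, cellGL_app]
    rcases hn : d 0 with _ | m
    · have h0 : d 0 = 0 := hn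
      rw [cc_zero]
      norm_num
    · rw [cc_rec m (d 1) (d 2)]
      simp only [Nat.add_sub_cancel,
        show ((1 : ℕ) ≤ m + 1) = True by simp, if_true, true_and,
        show ¬(m + 1 = 0) from by omega, false_and, if_false]
      split_ifs <;> first | omega | ring
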